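/- There exists a constant β > 0, depending only on n, |S|, |A|, r_max, and τ, such that for every player i, every state s, every joint action a, and all policy profiles π, π' ∈ Π, |adv^π_i(s,a) − adv^{π'}_i(s,a)| ≤ β ‖π − π'‖_∞; that is, the advantage functions are Lipschitz continuous in the policy profile. -/

import Mathlib

open Matrix BigOperators

noncomputable section

variable {n : ℕ} {S : Type} [Fintype S] [DecidableEq S]
  {A : Fin n → Type} [∀ i, Fintype (A i)] [∀ i, DecidableEq (A i)]

/-- A stationary policy profile: each player `i` assigns to each state a
probability distribution on her action set `A i`. -/
def IsPolicyProfile (π : ∀ i : Fin n, S → A i → ℝ) : Prop :=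
  (∀ i s a, 0 ≤ π i s a) ∧ (∀ i s, ∑ a, π i s a = 1)

/-- Transition probabilities `ℙ[s' | s, a]`. -/
def IsTransition (T : S → (∀ i, A i) → S → ℝ) : Prop :=
  (∀ s a s', 0 ≤ T s a s') ∧ (∀ s a, ∑ s', T s a s' = 1)

/-- A probability distribution on `S` (as a row vector). -/
def IsDist (w : S → ℝ) : Prop := (∀ s, 0 ≤ w s) ∧ ∑ s, w s = 1

/-- The transition matrix induced by a policy profile:
`P_π(s'|s) = ∑_a ℙ[s'|s,a] ∏_j π_j(a_j|s)`. -/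
def Pmat (T : S → (∀ i, A i) → S → ℝ) (π : ∀ i : Fin n, S → A i → ℝ) :
    Matrix S S ℝ :=
  fun s s' => ∑ a : ∀ i, A i, T s a s' * ∏ i, π i s (a i)

/-- Sup-norm distance between two policy profiles. -/
def polDist (π π' : ∀ i : Fin n, S → A i → ℝ) : ℝ :=
  ⨆ i, ⨆ s, ⨆ a, |π i s a - π' i s a|

/-- ℓ¹-norm on ℝ^S. -/
def l1 (w : S → ℝ) : ℝ := ∑ s, |w s|

/-- The expected one-step reward vector `R_i^π`. -/
def Rvec (r : S → (∀ i, A i) → ℝ) (π : ∀ i : Fin n, S → A i → ℝ) : S → ℝ :=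
  fun s => ∑ a : ∀ i, A i, (∏ j, π j s (a j)) * r s a

/-- The long-run average value `V_i(π) = ∑_s p_π(s) R_i^π(s)`, where `p` is the
stationary distribution of `P_π`. -/
def Vval (p : S → ℝ) (R : S → ℝ) : ℝ := ∑ s, p s * R s

/-- The uniform mixing assumption with mixing time `τ`. -/
def Mixing (T : S → (∀ i, A i) → S → ℝ) (τ : ℝ) : Prop :=
  ∀ π : ∀ i : Fin n, S → A i → ℝ, IsPolicyProfile π →
    ∀ w w' : S → ℝ, IsDist w → IsDist w' →
      l1 ((w - w') ᵥ* Pmat T π) ≤ Real.exp (-(1 / τ)) * l1 (w - w')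

/-- The advantage function
`adv^π_i(s,a) = r_i(s,a) − V_i(π) + ∑_{t≥1} ((e_s − p_π) P_π^t) R_i^π`. -/
def adv (T : S → (∀ i, A i) → S → ℝ) (r : S → (∀ i, A i) → ℝ)
    (π : ∀ i : Fin n, S → A i → ℝ) (p : S → ℝ) (s : S) (a : ∀ i, A i) : ℝ :=
  r s a - Vval p (Rvec r π)
    + ∑' t : ℕ, ((Pi.single s 1 - p) ᵥ* (Pmat T π ^ (t + 1))) ⬝ᵥ (Rvec r π)

/-- The average advantage function
`\bar adv^π_i(s, a_i) = ∑_{a_{-i}} (∏_{j≠i} π_j(a_j|s)) adv^π_i(s,(a_i,a_{-i}))`. -/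
def avgAdv (T : S → (∀ i, A i) → S → ℝ) (r : S → (∀ i, A i) → ℝ)
    (π : ∀ i : Fin n, S → A i → ℝ) (p : S → ℝ) (i : Fin n) (s : S) (ai : A i) : ℝ :=
  ∑ a : ∀ j, A j,
    if a i = ai then (∏ j ∈ Finset.univ.erase i, π j s (a j)) * adv T r π p s a
    else 0

set_option linter.unusedSectionVars false
set_option maxHeartbeats 2000000

lemma l1_nonneg (w : S → ℝ) : 0 ≤ l1 w := Finset.sum_nonneg fun _ _ => abs_nonneg _

lemma l1_smul (c : ℝ) (v : S → ℝ) : l1 (c • v) = |c| * l1 v := by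
  simp [l1, abs_mul, Finset.mul_sum]

lemma l1_add_le (v w : S → ℝ) : l1 (v + w) ≤ l1 v + l1 w := by
  rw [l1, l1, l1, ← Finset.sum_add_distrib]
  exact Finset.sum_le_sum fun s _ => abs_add_le _ _

lemma abs_dot_le {v R : S → ℝ} {C : ℝ} (hC : ∀ s, |R s| ≤ C) : |v ⬝ᵥ R| ≤ l1 v * C := by
  calc |v ⬝ᵥ R| ≤ ∑ s, |v s * R s| := Finset.abs_sum_le_sum_abs _ _
    _ ≤ ∑ s, |v s| * C := by
        refine Finset.sum_le_sum fun s _ => ?_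
        rw [abs_mul]
        exact mul_le_mul_of_nonneg_left (hC s) (abs_nonneg _)
    _ = l1 v * C := by rw [l1, Finset.sum_mul]

lemma l1_vecMul_le {v : S → ℝ} {M : Matrix S S ℝ} {B : ℝ}
    (hB : ∀ s, ∑ s', |M s s'| ≤ B) : l1 (v ᵥ* M) ≤ l1 v * B := by
  calc l1 (v ᵥ* M) ≤ ∑ s', ∑ s, |v s| * |M s s'| := by
        refine Finset.sum_le_sum fun s' _ => ?_
        calc |(v ᵥ* M) s'| ≤ ∑ s, |v s * M s s'| := Finset.abs_sum_le_sum_abs _ _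
          _ = ∑ s, |v s| * |M s s'| := by simp [abs_mul]
    _ = ∑ s, |v s| * ∑ s', |M s s'| := by
        rw [Finset.sum_comm]; simp [Finset.mul_sum]
    _ ≤ ∑ s, |v s| * B :=
        Finset.sum_le_sum fun s _ => mul_le_mul_of_nonneg_left (hB s) (abs_nonneg _)
    _ = l1 v * B := by rw [l1, Finset.sum_mul]

lemma abs_prod_sub_prod_le {ι : Type*} [DecidableEq ι] (t : Finset ι) (f g : ι → ℝ)
    (hf0 : ∀ i, 0 ≤ f i) (hf1 : ∀ i, f i ≤ 1) (hg0 : ∀ i, 0 ≤ g i) (hg1 : ∀ i, g i ≤ 1)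
    {d : ℝ} (hd : ∀ i, |f i - g i| ≤ d) :
    |∏ i ∈ t, f i - ∏ i ∈ t, g i| ≤ t.card * d := by
  induction t using Finset.induction with
  | empty => simp
  | @insert j t hj ih =>
    have hd0 : 0 ≤ d := le_trans (abs_nonneg _) (hd j)
    rw [Finset.prod_insert hj, Finset.prod_insert hj, Finset.card_insert_of_notMem hj]
    have hkey : f j * ∏ i ∈ t, f i - g j * ∏ i ∈ t, g i
        = f j * (∏ i ∈ t, f i - ∏ i ∈ t, g i) + (f j - g j) * ∏ i ∈ t, g i := by ring
    rw [hkey]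
    calc |f j * (∏ i ∈ t, f i - ∏ i ∈ t, g i) + (f j - g j) * ∏ i ∈ t, g i|
        ≤ |f j| * |∏ i ∈ t, f i - ∏ i ∈ t, g i| + |f j - g j| * |∏ i ∈ t, g i| := by
          rw [← abs_mul, ← abs_mul]; exact abs_add_le _ _
      _ ≤ 1 * (t.card * d) + d * 1 := by
          have h1 : |f j| ≤ 1 := abs_le.mpr ⟨by linarith [hf0 j], hf1 j⟩
          have h2 : |∏ i ∈ t, g i| ≤ 1 := by
            rw [abs_of_nonneg (Finset.prod_nonneg fun i _ => hg0 i)]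
            exact Finset.prod_le_one (fun i _ => hg0 i) (fun i _ => hg1 i)
          have e1 := mul_le_mul h1 ih (abs_nonneg _) zero_le_one
          have e2 := mul_le_mul (hd j) h2 (abs_nonneg _) hd0
          linarith
      _ ≤ ((t.card + 1 : ℕ) : ℝ) * d := by push_cast; linarith

lemma Pmat_nonneg {T : S → (∀ i, A i) → S → ℝ} {π : ∀ i : Fin n, S → A i → ℝ}
    (hT : IsTransition T) (hπ : IsPolicyProfile π) (s s' : S) : 0 ≤ Pmat T π s s' :=
  Finset.sum_nonneg fun a _ => mul_nonneg (hT.1 s a s')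
    (Finset.prod_nonneg fun i _ => hπ.1 i s (a i))

lemma sum_prod_policy {π : ∀ i : Fin n, S → A i → ℝ} (hπ : IsPolicyProfile π) (s : S) :
    ∑ a : ∀ i, A i, ∏ i, π i s (a i) = 1 := by
  rw [← Fintype.piFinset_univ, ← Finset.prod_univ_sum]
  simp [hπ.2 _ s]

lemma Pmat_row_sum {T : S → (∀ i, A i) → S → ℝ} {π : ∀ i : Fin n, S → A i → ℝ}
    (hT : IsTransition T) (hπ : IsPolicyProfile π) (s : S) :
    ∑ s', Pmat T π s s' = 1 := by
  have h : ∑ s', Pmat T π s s' = ∑ a : ∀ i, A i, (∑ s', T s a s') * ∏ i, π i s (a i) := by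
    simp only [Pmat, Finset.sum_mul]
    exact Finset.sum_comm
  rw [h]
  simp only [hT.2, one_mul]
  exact sum_prod_policy hπ s

lemma sum_vecMul_zero {M : Matrix S S ℝ} (hrow : ∀ s, ∑ s', M s s' = 1)
    {u : S → ℝ} (hu : ∑ s, u s = 0) : ∑ s', (u ᵥ* M) s' = 0 := by
  have : ∑ s', (u ᵥ* M) s' = ∑ s, u s * ∑ s', M s s' := by
    simp only [Matrix.vecMul, dotProduct, Finset.mul_sum]
    exact Finset.sum_comm
  rw [this]; simp [hrow, hu]

lemma contract_step {T : S → (∀ i, A i) → S → ℝ} {τ : ℝ} (hmix : Mixing T τ)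
    {π : ∀ i : Fin n, S → A i → ℝ} (hπ : IsPolicyProfile π)
    {u : S → ℝ} (hu : ∑ s, u s = 0) :
    l1 (u ᵥ* Pmat T π) ≤ Real.exp (-(1 / τ)) * l1 u := by
  set c := ∑ s, max (u s) 0 with hc
  have hc0 : 0 ≤ c := Finset.sum_nonneg fun s _ => le_max_right _ _
  have hneg : ∑ s, max (-u s) 0 = c := by
    have : ∑ s, (max (u s) 0 - max (-u s) 0) = 0 := by
      simp only [max_zero_sub_max_neg_zero_eq_self]; exact hu
    rw [Finset.sum_sub_distrib] at this
    linarith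
  have hl1 : l1 u = 2 * c := by
    rw [l1]
    have : ∀ s, |u s| = max (u s) 0 + max (-u s) 0 := fun s =>
      (max_zero_add_max_neg_zero_eq_abs_self _).symm
    simp_rw [this, Finset.sum_add_distrib, hneg, ← hc]
    ring
  rcases eq_or_lt_of_le hc0 with h0 | hpos
  · -- c = 0, so u = 0
    have hu0 : u = 0 := by
      funext s
      have h1 : max (u s) 0 = 0 :=
        (Finset.sum_eq_zero_iff_of_nonneg (fun s _ => le_max_right _ _)).mp h0.symm s
          (Finset.mem_univ s)
      have h2 : max (-u s) 0 = 0 := by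
        have := (Finset.sum_eq_zero_iff_of_nonneg
          (fun s _ => le_max_right (-u s) 0)).mp (by rw [hneg, ← h0]) s (Finset.mem_univ s)
        exact this
      have : |u s| = 0 := by rw [← max_zero_add_max_neg_zero_eq_abs_self, h1, h2]; ring
      simpa using abs_eq_zero.mp this
    simp [hu0, l1, Matrix.zero_vecMul]
  · set w : S → ℝ := fun s => max (u s) 0 / c with hw
    set w' : S → ℝ := fun s => max (-u s) 0 / c with hw'
    have hdw : IsDist w := by
      constructor
      · exact fun s => div_nonneg (le_max_right _ _) hc0
      · rw [hw, ← Finset.sum_div, ← hc, div_self hpos.ne']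
    have hdw' : IsDist w' := by
      constructor
      · exact fun s => div_nonneg (le_max_right _ _) hc0
      · rw [hw', ← Finset.sum_div, hneg, div_self hpos.ne']
    have hkey : u = c • (w - w') := by
      funext s
      simp only [Pi.smul_apply, Pi.sub_apply, hw, hw', smul_eq_mul]
      rw [mul_sub, mul_div_cancel₀ _ hpos.ne', mul_div_cancel₀ _ hpos.ne',
        max_zero_sub_max_neg_zero_eq_self]
    have hsub : l1 (w - w') = c⁻¹ * l1 u := by
      have : w - w' = c⁻¹ • u := by
        rw [hkey, smul_smul, inv_mul_cancel₀ hpos.ne', one_smul]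
      rw [this, l1_smul, abs_of_nonneg (inv_nonneg.mpr hc0)]
    calc l1 (u ᵥ* Pmat T π) = |c| * l1 ((w - w') ᵥ* Pmat T π) := by
          rw [hkey, Matrix.smul_vecMul, l1_smul]
      _ ≤ c * (Real.exp (-(1 / τ)) * l1 (w - w')) := by
          rw [abs_of_nonneg hc0]
          exact mul_le_mul_of_nonneg_left (hmix π hπ w w' hdw hdw') hc0
      _ = Real.exp (-(1 / τ)) * l1 u := by
          rw [hsub]; field_simp

lemma sum_vecMul_pow_zero {T : S → (∀ i, A i) → S → ℝ}
    {π : ∀ i : Fin n, S → A i → ℝ} (hT : IsTransition T) (hπ : IsPolicyProfile π)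
    {u : S → ℝ} (hu : ∑ s, u s = 0) (t : ℕ) :
    ∑ s', (u ᵥ* Pmat T π ^ t) s' = 0 := by
  induction t with
  | zero => simpa [Matrix.vecMul_one] using hu
  | succ t ih =>
    rw [pow_succ, ← Matrix.vecMul_vecMul]
    exact sum_vecMul_zero (Pmat_row_sum hT hπ) ih

lemma contract_pow {T : S → (∀ i, A i) → S → ℝ} {τ : ℝ} (hmix : Mixing T τ)
    (hT : IsTransition T) {π : ∀ i : Fin n, S → A i → ℝ} (hπ : IsPolicyProfile π)
    {u : S → ℝ} (hu : ∑ s, u s = 0) (t : ℕ) :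
    l1 (u ᵥ* Pmat T π ^ t) ≤ Real.exp (-(1 / τ)) ^ t * l1 u := by
  induction t with
  | zero => simp [Matrix.vecMul_one]
  | succ t ih =>
    rw [pow_succ, ← Matrix.vecMul_vecMul]
    calc l1 ((u ᵥ* Pmat T π ^ t) ᵥ* Pmat T π)
        ≤ Real.exp (-(1 / τ)) * l1 (u ᵥ* Pmat T π ^ t) :=
          contract_step hmix hπ (sum_vecMul_pow_zero hT hπ hu t)
      _ ≤ Real.exp (-(1 / τ)) * (Real.exp (-(1 / τ)) ^ t * l1 u) :=
          mul_le_mul_of_nonneg_left ih (Real.exp_nonneg _)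
      _ = Real.exp (-(1 / τ)) ^ (t + 1) * l1 u := by ring

lemma l1_pow_sub {T : S → (∀ i, A i) → S → ℝ} {τ : ℝ} (hmix : Mixing T τ)
    (hT : IsTransition T) {π π' : ∀ i : Fin n, S → A i → ℝ}
    (hπ : IsPolicyProfile π) (hπ' : IsPolicyProfile π')
    {K : ℝ} (hK : ∀ s, ∑ s', |Pmat T π s s' - Pmat T π' s s'| ≤ K) (hK0 : 0 ≤ K)
    {u : S → ℝ} (hu : ∑ s, u s = 0) (m : ℕ) :
    l1 (u ᵥ* Pmat T π ^ (m + 1) - u ᵥ* Pmat T π' ^ (m + 1))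
      ≤ (m + 1) * Real.exp (-(1 / τ)) ^ m * K * l1 u := by
  set γ := Real.exp (-(1 / τ)) with hγ
  induction m with
  | zero =>
    have h : u ᵥ* Pmat T π ^ (0 + 1) - u ᵥ* Pmat T π' ^ (0 + 1)
        = u ᵥ* (Pmat T π - Pmat T π') := by
      rw [zero_add, pow_one, pow_one, Matrix.vecMul_sub]
    rw [h]
    refine le_trans (l1_vecMul_le hK) (le_of_eq ?_)
    push_cast
    ring
  | succ m ih =>
    have hsplit : u ᵥ* Pmat T π ^ (m + 1 + 1) - u ᵥ* Pmat T π' ^ (m + 1 + 1)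
        = (u ᵥ* Pmat T π ^ (m + 1)) ᵥ* (Pmat T π - Pmat T π')
          + (u ᵥ* Pmat T π ^ (m + 1) - u ᵥ* Pmat T π' ^ (m + 1)) ᵥ* Pmat T π' := by
      rw [pow_succ (Pmat T π) (m + 1), pow_succ (Pmat T π') (m + 1),
        ← Matrix.vecMul_vecMul, ← Matrix.vecMul_vecMul, Matrix.vecMul_sub, Matrix.sub_vecMul]
      abel
    have h1 : l1 ((u ᵥ* Pmat T π ^ (m + 1)) ᵥ* (Pmat T π - Pmat T π'))
        ≤ γ ^ (m + 1) * l1 u * K :=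
      le_trans (l1_vecMul_le hK)
        (mul_le_mul_of_nonneg_right (contract_pow hmix hT hπ hu (m + 1)) hK0)
    have hz : ∑ s', (u ᵥ* Pmat T π ^ (m + 1) - u ᵥ* Pmat T π' ^ (m + 1)) s' = 0 := by
      simp only [Pi.sub_apply]
      rw [Finset.sum_sub_distrib, sum_vecMul_pow_zero hT hπ hu,
        sum_vecMul_pow_zero hT hπ' hu]
      ring
    have h2 : l1 ((u ᵥ* Pmat T π ^ (m + 1) - u ᵥ* Pmat T π' ^ (m + 1)) ᵥ* Pmat T π')
        ≤ γ * ((m + 1) * γ ^ m * K * l1 u) :=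
      le_trans (contract_step hmix hπ' hz)
        (mul_le_mul_of_nonneg_left ih (Real.exp_nonneg _))
    rw [hsplit]
    push_cast
    calc l1 _ ≤ _ + _ := l1_add_le _ _
      _ ≤ γ ^ (m + 1) * l1 u * K + γ * ((m + 1) * γ ^ m * K * l1 u) := add_le_add h1 h2
      _ = ((m : ℝ) + 1 + 1) * γ ^ (m + 1) * K * l1 u := by ring

lemma abs_sub_le_abs_add_abs' (x y : ℝ) : |x - y| ≤ |x| + |y| := by
  rw [sub_eq_add_neg]
  exact (abs_add_le _ _).trans_eq (by rw [abs_neg])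

lemma l1_sub_le {S : Type} [Fintype S] (v w : S → ℝ) : l1 (v - w) ≤ l1 v + l1 w := by
  rw [l1, l1, l1, ← Finset.sum_add_distrib]
  exact Finset.sum_le_sum fun s _ => abs_sub_le_abs_add_abs' _ _


/-- Lipschitz continuity of the advantage functions in the policy profile, with a constant
depending only on `n`, `S`, `A`, `r_max` and `τ`. -/
theorem adv_lipschitz
    (rmax τ : ℝ) (hrmax : 0 ≤ rmax) (hτ : 0 < τ) :
    ∃ β > (0 : ℝ),
      ∀ T : S → (∀ i, A i) → S → ℝ, IsTransition T → Mixing T τ →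
      ∀ r : Fin n → S → (∀ i, A i) → ℝ, (∀ i s a, r i s a ∈ Set.Icc (0 : ℝ) rmax) →
      ∀ π π' : ∀ i : Fin n, S → A i → ℝ, IsPolicyProfile π → IsPolicyProfile π' →
      ∀ p p' : S → ℝ, IsDist p → p ᵥ* Pmat T π = p →
        IsDist p' → p' ᵥ* Pmat T π' = p' →
      ∀ (i : Fin n) (s : S) (a : ∀ j, A j),
        |adv T (r i) π p s a - adv T (r i) π' p' s a| ≤ β * polDist π π' := by
  classical
  set γ := Real.exp (-(1 / τ)) with hγdef
  have hγ0 : 0 < γ := Real.exp_pos _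
  have hγ1 : γ < 1 := Real.exp_lt_one_iff.mpr (neg_neg_iff_pos.mpr (by positivity))
  have h1γ : 0 < 1 - γ := by linarith
  have hinv0 : 0 ≤ (1 - γ)⁻¹ := inv_nonneg.mpr h1γ.le
  set S2 : ℝ := ∑' t : ℕ, ((t : ℝ) + 1) * γ ^ t with hS2def
  have hS2sum : Summable (fun t : ℕ => ((t : ℝ) + 1) * γ ^ t) := by
    have h1 : Summable (fun t : ℕ => (t : ℝ) * γ ^ t) := by
      simpa using summable_pow_mul_geometric_of_norm_lt_one 1
        (by rwa [Real.norm_eq_abs, abs_of_pos hγ0])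
    have h2 : Summable (fun t : ℕ => γ ^ t) := summable_geometric_of_lt_one hγ0.le hγ1
    simpa [add_mul, one_mul] using h1.add h2
  have hS20 : 0 ≤ S2 := tsum_nonneg fun t => by positivity
  set cA : ℝ := (Fintype.card (∀ i, A i) : ℝ) with hcAdef
  have hcA0 : 0 ≤ cA := Nat.cast_nonneg _
  set C : ℝ := cA * ((n : ℝ)) * ((1 + (1 - γ)⁻¹) + (4 + (1 - γ)⁻¹) * S2) * rmax with hCdef
  have hC0 : 0 ≤ C := by
    refine mul_nonneg (mul_nonneg (mul_nonneg hcA0 (Nat.cast_nonneg _)) ?_) hrmax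
    nlinarith [hS20, hinv0]
  refine ⟨C + 1, by linarith, ?_⟩
  intro T hT hmix r hr π π' hπ hπ' p p' hpd hp hp'd hp' i s a
  set d := polDist π π' with hddef
  have hdle : ∀ (j : Fin n) (s₀ : S) (b : A j), |π j s₀ b - π' j s₀ b| ≤ d := by
    intro j s₀ b
    have h1 : |π j s₀ b - π' j s₀ b| ≤ ⨆ b, |π j s₀ b - π' j s₀ b| :=
      le_ciSup (f := fun b => |π j s₀ b - π' j s₀ b|)
        (Set.Finite.bddAbove (Set.finite_range _)) b
    have h2 : (⨆ b, |π j s₀ b - π' j s₀ b|) ≤ ⨆ s₀, ⨆ b, |π j s₀ b - π' j s₀ b| :=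
      le_ciSup (f := fun s₀ => ⨆ b, |π j s₀ b - π' j s₀ b|)
        (Set.Finite.bddAbove (Set.finite_range _)) s₀
    have h3 : (⨆ s₀, ⨆ b, |π j s₀ b - π' j s₀ b|) ≤ d :=
      le_ciSup (f := fun j => ⨆ s₀, ⨆ b, |π j s₀ b - π' j s₀ b|)
        (Set.Finite.bddAbove (Set.finite_range _)) j
    linarith
  have hd0 : 0 ≤ d :=
    Real.iSup_nonneg fun j => Real.iSup_nonneg fun s₀ => Real.iSup_nonneg fun b => abs_nonneg _
  have hle1 : ∀ (ρ : ∀ i : Fin n, S → A i → ℝ), IsPolicyProfile ρ →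
      ∀ (j : Fin n) (s₀ : S) (b : A j), ρ j s₀ b ≤ 1 := by
    intro ρ hρ j s₀ b
    rw [← hρ.2 j s₀]
    exact Finset.single_le_sum (fun b _ => hρ.1 j s₀ b) (Finset.mem_univ b)
  have hprod : ∀ (s₀ : S) (b : ∀ j, A j),
      |∏ j, π j s₀ (b j) - ∏ j, π' j s₀ (b j)| ≤ (n : ℝ) * d := by
    intro s₀ b
    have := abs_prod_sub_prod_le (ι := Fin n) Finset.univ
      (fun j => π j s₀ (b j)) (fun j => π' j s₀ (b j))
      (fun j => hπ.1 j s₀ (b j)) (fun j => hle1 π hπ j s₀ (b j))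
      (fun j => hπ'.1 j s₀ (b j)) (fun j => hle1 π' hπ' j s₀ (b j))
      (fun j => hdle j s₀ (b j))
    simpa using this
  set K : ℝ := cA * ((n : ℝ) * d) with hKdef
  have hK0 : 0 ≤ K := mul_nonneg hcA0 (mul_nonneg (Nat.cast_nonneg _) hd0)
  have hsumprod : ∀ s₀ : S,
      ∑ b : ∀ j, A j, |∏ j, π j s₀ (b j) - ∏ j, π' j s₀ (b j)| ≤ K := by
    intro s₀
    calc ∑ b : ∀ j, A j, |∏ j, π j s₀ (b j) - ∏ j, π' j s₀ (b j)|
        ≤ ∑ _b : ∀ j, A j, (n : ℝ) * d := Finset.sum_le_sum fun b _ => hprod s₀ b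
      _ = K := by rw [Finset.sum_const, Finset.card_univ, nsmul_eq_mul, hKdef, hcAdef]
  have hKrow : ∀ s₀ : S, ∑ s', |Pmat T π s₀ s' - Pmat T π' s₀ s'| ≤ K := by
    intro s₀
    have step1 : ∀ s' : S, |Pmat T π s₀ s' - Pmat T π' s₀ s'|
        ≤ ∑ b : ∀ j, A j, T s₀ b s' * |∏ j, π j s₀ (b j) - ∏ j, π' j s₀ (b j)| := by
      intro s'
      rw [Pmat, Pmat, ← Finset.sum_sub_distrib]
      refine le_trans (Finset.abs_sum_le_sum_abs _ _) (Finset.sum_le_sum fun b _ => ?_)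
      rw [← mul_sub, abs_mul, abs_of_nonneg (hT.1 _ _ _)]
    calc ∑ s', |Pmat T π s₀ s' - Pmat T π' s₀ s'|
        ≤ ∑ s', ∑ b : ∀ j, A j, T s₀ b s' * |∏ j, π j s₀ (b j) - ∏ j, π' j s₀ (b j)| :=
          Finset.sum_le_sum fun s' _ => step1 s'
      _ = ∑ b : ∀ j, A j, (∑ s', T s₀ b s') * |∏ j, π j s₀ (b j) - ∏ j, π' j s₀ (b j)| := by
          rw [Finset.sum_comm]
          simp [Finset.sum_mul]
      _ = ∑ b : ∀ j, A j, |∏ j, π j s₀ (b j) - ∏ j, π' j s₀ (b j)| := by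
          simp [hT.2]
      _ ≤ K := hsumprod s₀
  -- reward vector bounds
  have hRabs : ∀ (ρ : ∀ i : Fin n, S → A i → ℝ), IsPolicyProfile ρ →
      ∀ s₀ : S, |Rvec (r i) ρ s₀| ≤ rmax := by
    intro ρ hρ s₀
    simp only [Rvec]
    rw [abs_of_nonneg (Finset.sum_nonneg fun b _ => mul_nonneg
      (Finset.prod_nonneg fun j _ => hρ.1 j s₀ (b j)) (hr i s₀ b).1)]
    calc ∑ b : ∀ j, A j, (∏ j, ρ j s₀ (b j)) * r i s₀ b
        ≤ ∑ b : ∀ j, A j, (∏ j, ρ j s₀ (b j)) * rmax :=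
          Finset.sum_le_sum fun b _ => mul_le_mul_of_nonneg_left (hr i s₀ b).2
            (Finset.prod_nonneg fun j _ => hρ.1 j s₀ (b j))
      _ = rmax := by rw [← Finset.sum_mul, sum_prod_policy hρ s₀, one_mul]
  have hRd : ∀ s₀ : S, |Rvec (r i) π s₀ - Rvec (r i) π' s₀| ≤ K * rmax := by
    intro s₀
    simp only [Rvec]
    rw [← Finset.sum_sub_distrib]
    calc |∑ b : ∀ j, A j, ((∏ j, π j s₀ (b j)) * r i s₀ b - (∏ j, π' j s₀ (b j)) * r i s₀ b)|
        ≤ ∑ b : ∀ j, A j, |(∏ j, π j s₀ (b j) - ∏ j, π' j s₀ (b j))| * rmax := by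
          refine le_trans (Finset.abs_sum_le_sum_abs _ _) (Finset.sum_le_sum fun b _ => ?_)
          rw [← sub_mul, abs_mul]
          exact mul_le_mul_of_nonneg_left ((abs_le.mpr ⟨by linarith [(hr i s₀ b).1,
            (hr i s₀ b).2], (hr i s₀ b).2⟩ : |r i s₀ b| ≤ rmax)) (abs_nonneg _)
      _ = (∑ b : ∀ j, A j, |∏ j, π j s₀ (b j) - ∏ j, π' j s₀ (b j)|) * rmax := by
          rw [Finset.sum_mul]
      _ ≤ K * rmax := mul_le_mul_of_nonneg_right (hsumprod s₀) hrmax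
  -- stationary distributions
  have hl1p : l1 p = 1 := by
    rw [l1, ← hpd.2]
    exact Finset.sum_congr rfl fun s₀ _ => abs_of_nonneg (hpd.1 s₀)
  have hl1p' : l1 p' = 1 := by
    rw [l1, ← hp'd.2]
    exact Finset.sum_congr rfl fun s₀ _ => abs_of_nonneg (hp'd.1 s₀)
  have hpp'0 : ∑ s₀, (p - p') s₀ = 0 := by
    simp only [Pi.sub_apply]
    rw [Finset.sum_sub_distrib, hpd.2, hp'd.2]
    ring
  have hpp' : l1 (p - p') ≤ K * (1 - γ)⁻¹ := by
    have hkey : p - p' = p ᵥ* (Pmat T π - Pmat T π') + (p - p') ᵥ* Pmat T π' := by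
      rw [Matrix.vecMul_sub, Matrix.sub_vecMul, hp, hp']
      abel
    have hstep : l1 (p - p') ≤ K + γ * l1 (p - p') := by
      calc l1 (p - p') = l1 (p ᵥ* (Pmat T π - Pmat T π') + (p - p') ᵥ* Pmat T π') := by
            rw [← hkey]
        _ ≤ l1 (p ᵥ* (Pmat T π - Pmat T π')) + l1 ((p - p') ᵥ* Pmat T π') := l1_add_le _ _
        _ ≤ l1 p * K + γ * l1 (p - p') :=
            add_le_add (l1_vecMul_le hKrow) (contract_step hmix hπ' hpp'0)
        _ = K + γ * l1 (p - p') := by rw [hl1p, one_mul]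
    rw [← div_eq_mul_inv, le_div_iff₀ h1γ]
    nlinarith [hstep]
  -- the vector e_s - p
  have hsingle0 : ∀ s'' : S, (0 : ℝ) ≤ (Pi.single s 1 : S → ℝ) s'' := by
    intro s''
    rw [Pi.single_apply]
    split <;> norm_num
  have hsinglesum : ∑ s'' : S, (Pi.single s 1 : S → ℝ) s'' = 1 := by
    simp [Pi.single_apply]
  have hsum_e : ∑ s'', ((Pi.single s 1 : S → ℝ) - p) s'' = 0 := by
    simp only [Pi.sub_apply]
    rw [Finset.sum_sub_distrib, hsinglesum, hpd.2]
    ring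
  have hsum_e' : ∑ s'', ((Pi.single s 1 : S → ℝ) - p') s'' = 0 := by
    simp only [Pi.sub_apply]
    rw [Finset.sum_sub_distrib, hsinglesum, hp'd.2]
    ring
  have hl1e : ∀ q : S → ℝ, IsDist q → l1 ((Pi.single s 1 : S → ℝ) - q) ≤ 2 := by
    intro q hq
    calc l1 ((Pi.single s 1 : S → ℝ) - q) ≤ ∑ s'' : S, ((Pi.single s 1 : S → ℝ) s'' + q s'') := by
          refine Finset.sum_le_sum fun s'' _ => ?_
          calc |((Pi.single s 1 : S → ℝ) - q) s''| ≤ |(Pi.single s 1 : S → ℝ) s''| + |q s''| := by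
                rw [Pi.sub_apply]; exact abs_sub_le_abs_add_abs' _ _
            _ = (Pi.single s 1 : S → ℝ) s'' + q s'' := by
                rw [abs_of_nonneg (hsingle0 s''), abs_of_nonneg (hq.1 s'')]
      _ = 2 := by rw [Finset.sum_add_distrib, hsinglesum, hq.2]; norm_num
  -- the series terms
  set f : ℕ → ℝ := fun t => ((Pi.single s 1 - p) ᵥ* (Pmat T π ^ (t + 1))) ⬝ᵥ (Rvec (r i) π)
    with hfdef
  set f' : ℕ → ℝ := fun t => ((Pi.single s 1 - p') ᵥ* (Pmat T π' ^ (t + 1))) ⬝ᵥ (Rvec (r i) π')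
    with hf'def
  have hgeo : Summable (fun t : ℕ => γ ^ t) := summable_geometric_of_lt_one hγ0.le hγ1
  have hfabs : ∀ (q : S → ℝ) (hq : IsDist q) (ρ : ∀ i : Fin n, S → A i → ℝ)
      (hρ : IsPolicyProfile ρ) (t : ℕ),
      |((Pi.single s 1 - q) ᵥ* (Pmat T ρ ^ (t + 1))) ⬝ᵥ (Rvec (r i) ρ)|
        ≤ 2 * rmax * γ * γ ^ t := by
    intro q hq ρ hρ t
    have hz : ∑ s'', ((Pi.single s 1 : S → ℝ) - q) s'' = 0 := by
      simp only [Pi.sub_apply]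
      rw [Finset.sum_sub_distrib, hsinglesum, hq.2]
      ring
    calc |((Pi.single s 1 - q) ᵥ* (Pmat T ρ ^ (t + 1))) ⬝ᵥ (Rvec (r i) ρ)|
        ≤ l1 ((Pi.single s 1 - q) ᵥ* Pmat T ρ ^ (t + 1)) * rmax := abs_dot_le (hRabs ρ hρ)
      _ ≤ (γ ^ (t + 1) * 2) * rmax := by
          have h1 := contract_pow hmix hT hρ hz (t + 1)
          have h2 := hl1e q hq
          have hg := pow_nonneg hγ0.le (t + 1)
          have h3 : l1 ((Pi.single s 1 - q) ᵥ* Pmat T ρ ^ (t + 1)) ≤ γ ^ (t + 1) * 2 :=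
            le_trans h1 (by nlinarith)
          exact mul_le_mul_of_nonneg_right h3 hrmax
      _ = 2 * rmax * γ * γ ^ t := by ring
  have hfsum : Summable f :=
    Summable.of_norm_bounded (hgeo.mul_left (2 * rmax * γ))
      (fun t => by rw [Real.norm_eq_abs]; exact hfabs p hpd π hπ t)
  have hf'sum : Summable f' :=
    Summable.of_norm_bounded (hgeo.mul_left (2 * rmax * γ))
      (fun t => by rw [Real.norm_eq_abs]; exact hfabs p' hp'd π' hπ' t)
  -- per-term difference bound
  have hterm : ∀ t : ℕ, |f t - f' t|
      ≤ K * rmax * (4 + (1 - γ)⁻¹) * (((t : ℝ) + 1) * γ ^ t) := by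
    intro t
    have hsplit : f t - f' t
        = ((Pi.single s 1 - p) ᵥ* Pmat T π ^ (t + 1)) ⬝ᵥ (Rvec (r i) π - Rvec (r i) π')
          + (((Pi.single s 1 - p) ᵥ* Pmat T π ^ (t + 1))
              - ((Pi.single s 1 - p') ᵥ* Pmat T π' ^ (t + 1))) ⬝ᵥ Rvec (r i) π' := by
      simp only [hfdef, hf'def, dotProduct_sub, sub_dotProduct]
      ring
    have hRd' : ∀ s₀ : S, |(Rvec (r i) π - Rvec (r i) π') s₀| ≤ K * rmax := fun s₀ => by
      rw [Pi.sub_apply]; exact hRd s₀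
    have hA : |((Pi.single s 1 - p) ᵥ* Pmat T π ^ (t + 1)) ⬝ᵥ (Rvec (r i) π - Rvec (r i) π')|
        ≤ (γ ^ (t + 1) * 2) * (K * rmax) := by
      refine le_trans (abs_dot_le hRd') ?_
      · have h1 := contract_pow hmix hT hπ hsum_e (t + 1)
        have h2 := hl1e p hpd
        have hg := pow_nonneg hγ0.le (t + 1)
        have h3 : l1 ((Pi.single s 1 - p) ᵥ* Pmat T π ^ (t + 1)) ≤ γ ^ (t + 1) * 2 :=
          le_trans h1 (by nlinarith)
        exact mul_le_mul_of_nonneg_right h3 (mul_nonneg hK0 hrmax)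
    have hvec : ((Pi.single s 1 - p) ᵥ* Pmat T π ^ (t + 1))
        - ((Pi.single s 1 - p') ᵥ* Pmat T π' ^ (t + 1))
        = ((Pi.single s 1 - p) ᵥ* Pmat T π ^ (t + 1)
            - (Pi.single s 1 - p) ᵥ* Pmat T π' ^ (t + 1))
          - ((p - p') ᵥ* Pmat T π' ^ (t + 1)) := by
      rw [Matrix.sub_vecMul, Matrix.sub_vecMul, Matrix.sub_vecMul, Matrix.sub_vecMul]
      abel
    have hB1 := l1_pow_sub hmix hT hπ hπ' hKrow hK0 hsum_e t
    have hB2 := contract_pow hmix hT hπ' hpp'0 (t + 1)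
    have hB : |(((Pi.single s 1 - p) ᵥ* Pmat T π ^ (t + 1))
          - ((Pi.single s 1 - p') ᵥ* Pmat T π' ^ (t + 1))) ⬝ᵥ Rvec (r i) π'|
        ≤ (((t : ℝ) + 1) * γ ^ t * K * 2 + γ ^ (t + 1) * (K * (1 - γ)⁻¹)) * rmax := by
      refine le_trans (abs_dot_le (hRabs π' hπ')) (mul_le_mul_of_nonneg_right ?_ hrmax)
      rw [hvec]
      refine le_trans (l1_sub_le _ _) (add_le_add (le_trans hB1 ?_) (le_trans hB2 ?_))
      · have h2 := hl1e p hpd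
        have hg : (0:ℝ) ≤ ((t : ℝ) + 1) * γ ^ t * K := by positivity
        nlinarith
      · exact mul_le_mul_of_nonneg_left hpp' (pow_nonneg hγ0.le _)
    rw [hsplit]
    refine le_trans (abs_add_le _ _) (le_trans (add_le_add hA hB) ?_)
    have e1 : γ ^ (t + 1) ≤ ((t : ℝ) + 1) * γ ^ t := by
      rw [pow_succ]
      nlinarith [pow_nonneg hγ0.le t, (Nat.cast_nonneg t : (0:ℝ) ≤ (t : ℝ))]
    have e2 : γ ^ t ≤ ((t : ℝ) + 1) * γ ^ t := by
      nlinarith [pow_nonneg hγ0.le t, (Nat.cast_nonneg t : (0:ℝ) ≤ (t : ℝ))]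
    have m1 := mul_le_mul_of_nonneg_right e1 (mul_nonneg hK0 hrmax)
    have m2 := mul_le_mul_of_nonneg_right e1
      (mul_nonneg (mul_nonneg hK0 hinv0) hrmax)
    have m3 := mul_le_mul_of_nonneg_right e2 (mul_nonneg hK0 hrmax)
    nlinarith [m1, m2, m3]
  have hterm_abs_sum : Summable (fun t : ℕ => |f t - f' t|) :=
    Summable.of_nonneg_of_le (fun t => abs_nonneg _) hterm
      (hS2sum.mul_left (K * rmax * (4 + (1 - γ)⁻¹)))
  have htail : |(∑' t, f t) - ∑' t, f' t| ≤ K * rmax * (4 + (1 - γ)⁻¹) * S2 := by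
    rw [← Summable.tsum_sub hfsum hf'sum]
    calc |∑' t, (f t - f' t)| ≤ ∑' t, |f t - f' t| := by
          simpa [Real.norm_eq_abs] using norm_tsum_le_tsum_norm
            (f := fun t => f t - f' t)
            (by simpa [Real.norm_eq_abs] using hterm_abs_sum)
      _ ≤ ∑' t : ℕ, K * rmax * (4 + (1 - γ)⁻¹) * (((t : ℝ) + 1) * γ ^ t) :=
          Summable.tsum_le_tsum hterm hterm_abs_sum
            (hS2sum.mul_left (K * rmax * (4 + (1 - γ)⁻¹)))
      _ = K * rmax * (4 + (1 - γ)⁻¹) * S2 := by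
          rw [hS2def, tsum_mul_left]
  -- value difference
  have hV : |Vval p (Rvec (r i) π) - Vval p' (Rvec (r i) π')|
      ≤ K * rmax + K * (1 - γ)⁻¹ * rmax := by
    have hVsplit : Vval p (Rvec (r i) π) - Vval p' (Rvec (r i) π')
        = p ⬝ᵥ (Rvec (r i) π - Rvec (r i) π') + (p - p') ⬝ᵥ Rvec (r i) π' := by
      simp only [Vval, dotProduct, Pi.sub_apply]
      rw [← Finset.sum_sub_distrib, ← Finset.sum_add_distrib]
      exact Finset.sum_congr rfl fun s₀ _ => by ring
    rw [hVsplit]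
    refine le_trans (abs_add_le _ _) (add_le_add ?_ ?_)
    · have hRd' : ∀ s₀ : S, |(Rvec (r i) π - Rvec (r i) π') s₀| ≤ K * rmax := fun s₀ => by
        rw [Pi.sub_apply]; exact hRd s₀
      exact le_trans (abs_dot_le hRd') (le_of_eq (by rw [hl1p, one_mul]))
    · calc |(p - p') ⬝ᵥ Rvec (r i) π'| ≤ l1 (p - p') * rmax := abs_dot_le (hRabs π' hπ')
        _ ≤ K * (1 - γ)⁻¹ * rmax := mul_le_mul_of_nonneg_right hpp' hrmax
  -- assemble
  have hadv : adv T (r i) π p s a - adv T (r i) π' p' s a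
      = ((∑' t, f t) - ∑' t, f' t)
        - (Vval p (Rvec (r i) π) - Vval p' (Rvec (r i) π')) := by
    simp only [adv, hfdef, hf'def]
    ring
  rw [hadv]
  have hfinal : K * rmax * (4 + (1 - γ)⁻¹) * S2 + (K * rmax + K * (1 - γ)⁻¹ * rmax)
      = C * d := by
    rw [hKdef, hCdef]
    ring
  have hexp : (C + 1) * d = C * d + d := by ring
  calc |((∑' t, f t) - ∑' t, f' t)
        - (Vval p (Rvec (r i) π) - Vval p' (Rvec (r i) π'))|
      ≤ |(∑' t, f t) - ∑' t, f' t|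
        + |Vval p (Rvec (r i) π) - Vval p' (Rvec (r i) π')| := abs_sub_le_abs_add_abs' _ _
    _ ≤ K * rmax * (4 + (1 - γ)⁻¹) * S2 + (K * rmax + K * (1 - γ)⁻¹ * rmax) :=
        add_le_add htail hV
    _ ≤ (C + 1) * d := by rw [hfinal]; linarith

end
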